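/- Let γ > 2, β > 0 and p > 0. Then there exists exactly one u > 0 satisfying the transcendental equation γ − 1 − γu = exp(−β((1+u)^{−p} − 1)), and this solution ū lies in the open interval (0, 1). -/

import Mathlib

open Real

/-- Auxiliary: the function `u ↦ exp(-(β((1+u)^{-p}-1))) + γ u` is strictly
monotone on nonnegative reals. -/
lemma excited_aux_strictMonoOn (γ β p : ℝ) (hγ : 0 < γ) (hβ : 0 < β) (hp : 0 < p) :
    StrictMonoOn (fun u : ℝ => Real.exp (-(β * ((1 + u) ^ (-p) - 1))) + γ * u)
      (Set.Ici (0 : ℝ)) := by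
  intro x hx y hy hxy
  simp only [Set.mem_Ici] at hx hy
  have h1x : (0:ℝ) ≤ 1 + x := by linarith
  have h1x' : (0:ℝ) < 1 + x := by linarith
  have hle : (1 + y) ^ (-p) ≤ (1 + x) ^ (-p) := by
    rw [Real.rpow_neg h1x, Real.rpow_neg (by linarith)]
    have hbase : (1 + x) ^ p ≤ (1 + y) ^ p :=
      Real.rpow_le_rpow h1x (by linarith) hp.le
    have hpos : (0:ℝ) < (1 + x) ^ p := Real.rpow_pos_of_pos h1x' p
    exact inv_anti₀ hpos hbase
  have hexp : Real.exp (-(β * ((1 + x) ^ (-p) - 1))) ≤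
      Real.exp (-(β * ((1 + y) ^ (-p) - 1))) := by
    apply Real.exp_le_exp.mpr
    nlinarith
  have : γ * x < γ * y := by nlinarith
  dsimp only
  linarith

theorem excited_state_exists_unique
    (γ β p : ℝ) (hγ : 2 < γ) (hβ : 0 < β) (hp : 0 < p) :
    ∃ ub : ℝ, ub ∈ Set.Ioo (0 : ℝ) 1 ∧
      γ - 1 - γ * ub = Real.exp (-(β * ((1 + ub) ^ (-p) - 1))) ∧
      ∀ u : ℝ, 0 < u → γ - 1 - γ * u = Real.exp (-(β * ((1 + u) ^ (-p) - 1))) → u = ub := by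
  set f : ℝ → ℝ := fun u : ℝ => Real.exp (-(β * ((1 + u) ^ (-p) - 1))) + γ * u with hf
  have hγ0 : (0:ℝ) < γ := by linarith
  have hmono := excited_aux_strictMonoOn γ β p hγ0 hβ hp
  have hcont : ContinuousOn f (Set.Icc (0:ℝ) 1) := by
    have hinner : ContinuousOn (fun u : ℝ => -(β * ((1 + u) ^ (-p) - 1)))
        (Set.Icc (0:ℝ) 1) := by
      apply ContinuousOn.neg
      apply continuousOn_const.mul
      apply ContinuousOn.sub _ continuousOn_const
      apply ContinuousOn.rpow_const (by fun_prop)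
      intro x hx
      left
      intro h
      linarith [hx.1]
    exact hinner.rexp.add ((continuous_const.mul continuous_id).continuousOn)
  have hf0 : f 0 = 1 := by
    simp [hf, Real.one_rpow]
  have hf1 : γ - 1 < f 1 := by
    have : 0 < Real.exp (-(β * ((1 + (1:ℝ)) ^ (-p) - 1))) := Real.exp_pos _
    simp only [hf]
    linarith
  have hivt : Set.Ioo (f 0) (f 1) ⊆ f '' Set.Ioo (0:ℝ) 1 :=
    intermediate_value_Ioo (by norm_num) hcont
  have hmem : (γ - 1) ∈ Set.Ioo (f 0) (f 1) := by
    constructor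
    · rw [hf0]; linarith
    · exact hf1
  obtain ⟨ub, hub, hfub⟩ := hivt hmem
  refine ⟨ub, hub, ?_, ?_⟩
  · have : Real.exp (-(β * ((1 + ub) ^ (-p) - 1))) + γ * ub = γ - 1 := hfub
    linarith
  · intro u hu heq
    have hfu : f u = γ - 1 := by simp only [hf]; linarith
    have hfub' : f ub = γ - 1 := hfub
    exact hmono.injOn (Set.mem_Ici.mpr hu.le) (Set.mem_Ici.mpr hub.1.le)
      (hfu.trans hfub'.symm)
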